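/- Let F be a class of real-valued functions on a set X with pseudo-dimension d, and let F^k be the class of functions of the form x ↦ min_{ℓ ∈ [k]} f^ℓ(x) with f^1, ..., f^k ∈ F. Then the pseudo-dimension of F^k is O(dk log(dk)). -/

import Mathlib

/-- A finite set `C` is (pseudo-)shattered by a class `F` of real-valued functions if
there are thresholds `r` such that every subset of `C` is cut out by some `f ∈ F`. -/
def PShatters {X : Type*} (F : Set (X → ℝ)) (C : Finset X) : Prop :=
  ∃ r : X → ℝ, ∀ C' ⊆ C, ∃ f ∈ F, ∀ x ∈ C, (f x ≤ r x ↔ x ∈ C')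

/-- The pseudo-dimension of `F` is at most `d`. -/
def PDimLE {X : Type*} (F : Set (X → ℝ)) (d : ℕ) : Prop :=
  ∀ C : Finset X, PShatters F C → C.card ≤ d

private lemma aux_two_mul_lt_two_pow {m : ℕ} (hm : 3 ≤ m) : 2 * m < 2 ^ m := by
  induction m with
  | zero => omega
  | succ n ih =>
    rcases Nat.lt_or_ge n 3 with h | h
    · interval_cases n <;> simp_all
    · have := ih h
      have h2 : 2 ≤ 2 ^ n := Nat.one_lt_two_pow (by omega)
      rw [pow_succ]
      omega

private lemma aux_log_succ_le_half {L : ℕ} (hL : 4 ≤ L) : Nat.log 2 (L + 1) ≤ L / 2 := by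
  have h3 : 3 ≤ L / 2 + 1 := by omega
  have h1 : L + 1 < 2 ^ (L / 2 + 1) := by
    have := aux_two_mul_lt_two_pow h3
    omega
  have := (Nat.log_lt_iff_lt_pow (by norm_num) (by omega)).mpr h1
  omega

private lemma aux_arith {m S : ℕ} (hm : 1 ≤ m) (h : S ≤ m * (Nat.log 2 (S + 1) + 1)) :
    S ≤ 5 * m * (Nat.log 2 m + 1) := by
  set L := Nat.log 2 (S + 1) with hLdef
  set A := Nat.log 2 m with hAdef
  rcases Nat.lt_or_ge L 4 with hL | hL
  · calc S ≤ m * (L + 1) := h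
      _ ≤ m * 4 := Nat.mul_le_mul_left _ (by omega)
      _ ≤ 5 * m * (A + 1) := by nlinarith
  · have h1 : 2 ^ L ≤ S + 1 := Nat.pow_log_le_self 2 (by omega)
    have h2 : m < 2 ^ (A + 1) := Nat.lt_pow_succ_log_self (by norm_num) m
    have h3 : L + 1 < 2 ^ (Nat.log 2 (L + 1) + 1) :=
      Nat.lt_pow_succ_log_self (by norm_num) (L + 1)
    have h4 : 2 ^ L < 2 ^ (A + Nat.log 2 (L + 1) + 3) := by
      calc 2 ^ L ≤ S + 1 := h1
        _ ≤ 2 * (m * (L + 1)) := by nlinarith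
        _ < 2 * (2 ^ (A + 1) * 2 ^ (Nat.log 2 (L + 1) + 1)) := by
            have hpos : 0 < 2 ^ (A + 1) := Nat.pow_pos (by norm_num)
            have : m * (L + 1) < 2 ^ (A + 1) * 2 ^ (Nat.log 2 (L + 1) + 1) := by
              calc m * (L + 1) ≤ m * 2 ^ (Nat.log 2 (L + 1) + 1) :=
                    Nat.mul_le_mul_left _ (le_of_lt h3)
                _ < 2 ^ (A + 1) * 2 ^ (Nat.log 2 (L + 1) + 1) :=
                    Nat.mul_lt_mul_of_lt_of_le h2 (le_refl _) (Nat.pow_pos (by norm_num))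
            omega
        _ = 2 ^ (A + Nat.log 2 (L + 1) + 3) := by rw [← pow_add, ← pow_succ']; ring_nf
    have h5 : L < A + Nat.log 2 (L + 1) + 3 :=
      (Nat.pow_lt_pow_iff_right (by norm_num)).mp h4
    have h6 : Nat.log 2 (L + 1) ≤ L / 2 := aux_log_succ_le_half hL
    have h7 : L ≤ 2 * A + 4 := by omega
    calc S ≤ m * (L + 1) := h
      _ ≤ m * (2 * A + 5) := Nat.mul_le_mul_left _ (by omega)
      _ ≤ 5 * m * (A + 1) := by nlinarith

private lemma aux_sum_choose_le (S d : ℕ) :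
    ∑ i ∈ Finset.Iic d, S.choose i ≤ (S + 1) ^ d := by
  have hIic : ∀ n : ℕ, Finset.Iic n = Finset.range (n + 1) := by
    intro n; ext x; simp [Nat.lt_succ_iff]
  induction d with
  | zero => rw [hIic]; simp
  | succ d ih =>
    rw [hIic, Finset.sum_range_succ, ← hIic]
    have h1 : S.choose (d + 1) ≤ S ^ (d + 1) := Nat.choose_le_pow _ _
    have h2 : S ^ d ≤ (S + 1) ^ d := Nat.pow_le_pow_left (by omega) d
    have h3 : S ^ (d + 1) ≤ S * (S + 1) ^ d := by
      rw [pow_succ']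
      exact Nat.mul_le_mul_left _ h2
    have h4 : (S + 1) ^ (d + 1) = (S + 1) ^ d + S * (S + 1) ^ d := by ring
    omega

/-- If `F` has pseudo-dimension at most `d`, then the class of pointwise minima of `k`
functions from `F` has pseudo-dimension `O(dk log(dk))`. -/
theorem pdim_min_of_k {X : Type*} :
    ∃ c : ℕ, 0 < c ∧
      ∀ (F : Set (X → ℝ)) (d k : ℕ), 0 < d → 0 < k → PDimLE F d →
        PDimLE {g : X → ℝ | ∃ f : Fin k → X → ℝ, (∀ ℓ, f ℓ ∈ F) ∧
            g = fun x => ⨅ ℓ : Fin k, f ℓ x}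
          (c * d * k * (Nat.log 2 (d * k) + 1)) := by
  classical
  refine ⟨5, by norm_num, ?_⟩
  intro F d k hd hk hF C hC
  obtain ⟨r, hr⟩ := hC
  haveI : Nonempty (Fin k) := ⟨⟨0, hk⟩⟩
  set S := C.card with hS
  set α := {x // x ∈ C}
  -- the minimum attains, so inf ≤ c iff some coordinate is ≤ c
  have hmin : ∀ (f : Fin k → ℝ) (c : ℝ), (⨅ ℓ, f ℓ) ≤ c ↔ ∃ ℓ, f ℓ ≤ c := by
    intro f c
    constructor
    · intro h
      obtain ⟨ℓ₀, hℓ₀⟩ := exists_eq_ciInf_of_finite (f := f)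
      exact ⟨ℓ₀, by rw [hℓ₀]; exact h⟩
    · rintro ⟨ℓ, hℓ⟩
      exact le_trans (ciInf_le (Set.finite_range f).bddBelow ℓ) hℓ
  -- the family of traces of F on C
  set 𝒜 : Finset (Finset α) :=
    Finset.univ.filter (fun t => ∃ f ∈ F, ∀ a : α, (f a.1 ≤ r a.1 ↔ a ∈ t)) with h𝒜
  have mem𝒜 : ∀ t : Finset α, t ∈ 𝒜 ↔ ∃ f ∈ F, ∀ a : α, (f a.1 ≤ r a.1 ↔ a ∈ t) := by
    intro t; simp [h𝒜]
  -- VC dimension of the trace family is at most d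
  have hvc : 𝒜.vcDim ≤ d := by
    apply Finset.sup_le
    intro s hs
    have hsh : 𝒜.Shatters s := Finset.mem_shatterer.1 hs
    set emb : α ↪ X := ⟨Subtype.val, Subtype.val_injective⟩
    set D : Finset X := s.map emb with hD
    have hDC : D ⊆ C := by
      intro x hx
      simp only [hD, Finset.mem_map] at hx
      obtain ⟨a, _, rfl⟩ := hx
      exact a.2
    have hPD : PShatters F D := by
      refine ⟨r, fun C' hC' => ?_⟩
      set t : Finset α := s.filter (fun a => a.1 ∈ C') with ht
      have hts : t ⊆ s := Finset.filter_subset _ _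
      obtain ⟨u, hu, hsu⟩ := hsh hts
      obtain ⟨f, hfF, hfu⟩ := (mem𝒜 u).1 hu
      refine ⟨f, hfF, fun x hx => ?_⟩
      simp only [hD, Finset.mem_map] at hx
      obtain ⟨a, has, rfl⟩ := hx
      have h2 : a ∈ u ↔ a ∈ t := by
        constructor
        · intro h; rw [← hsu]; exact Finset.mem_inter.2 ⟨has, h⟩
        · intro h; rw [← hsu] at h; exact (Finset.mem_inter.1 h).2
      have h3 : a ∈ t ↔ a.1 ∈ C' := by simp [ht, has]
      show f a.1 ≤ r a.1 ↔ a.1 ∈ C'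
      rw [hfu a, h2, h3]
    have := hF D hPD
    rwa [hD, Finset.card_map] at this
  -- cardinality bound on 𝒜
  have hScard : Fintype.card α = S := Fintype.card_coe C
  have h𝒜card : 𝒜.card ≤ (S + 1) ^ d := by
    calc 𝒜.card ≤ 𝒜.shatterer.card := Finset.card_le_card_shatterer 𝒜
      _ ≤ ∑ i ∈ Finset.Iic 𝒜.vcDim, (Fintype.card α).choose i :=
          Finset.card_shatterer_le_sum_vcDim
      _ ≤ ∑ i ∈ Finset.Iic d, S.choose i := by
          rw [hScard]
          exact Finset.sum_le_sum_of_subset (Finset.Iic_subset_Iic.2 hvc)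
      _ ≤ (S + 1) ^ d := aux_sum_choose_le S d
  -- for each subset of α there is a k-tuple of traces whose union is that subset
  have key : ∀ s : Finset α, ∃ f : Fin k → X → ℝ, (∀ ℓ, f ℓ ∈ F) ∧
      ∀ a : α, (a ∈ s ↔ ∃ ℓ, f ℓ a.1 ≤ r a.1) := by
    intro s
    set emb : α ↪ X := ⟨Subtype.val, Subtype.val_injective⟩
    set D : Finset X := s.map emb with hD
    have hDC : D ⊆ C := by
      intro x hx
      simp only [hD, Finset.mem_map] at hx
      obtain ⟨a, _, rfl⟩ := hx
      exact a.2
    obtain ⟨g, hgmem, hg⟩ := hr D hDC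
    obtain ⟨f, hfF, rfl⟩ := hgmem
    refine ⟨f, hfF, fun a => ?_⟩
    have h1 := hg a.1 a.2
    have h2 : a.1 ∈ D ↔ a ∈ s := by
      simp only [hD, Finset.mem_map]
      constructor
      · rintro ⟨b, hb, hba⟩
        have : b = a := Subtype.ext hba
        rwa [← this]
      · intro ha; exact ⟨a, ha, rfl⟩
    have h1' : (⨅ ℓ, f ℓ a.1) ≤ r a.1 ↔ a.1 ∈ D := h1
    rw [← h2, ← h1']
    exact hmin (fun ℓ => f ℓ a.1) (r a.1)
  -- build the injection
  choose ft hftF hft using key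
  set Φ : Finset α → (Fin k → {t // t ∈ 𝒜}) := fun s ℓ =>
    ⟨Finset.univ.filter (fun a : α => ft s ℓ a.1 ≤ r a.1), by
      rw [mem𝒜]
      exact ⟨ft s ℓ, hftF s ℓ, fun a => by simp⟩⟩ with hΦ
  have hΦinj : Function.Injective Φ := by
    intro s s' hss
    ext a
    have h1 := hft s a
    have h2 := hft s' a
    have h3 : ∀ ℓ, (ft s ℓ a.1 ≤ r a.1 ↔ ft s' ℓ a.1 ≤ r a.1) := by
      intro ℓ
      have := congrFun hss ℓ
      have := congrArg Subtype.val this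
      simp only [hΦ] at this
      constructor
      · intro h
        have ha : a ∈ Finset.univ.filter (fun a : α => ft s ℓ a.1 ≤ r a.1) := by simp [h]
        rw [this] at ha
        simpa using ha
      · intro h
        have ha : a ∈ Finset.univ.filter (fun a : α => ft s' ℓ a.1 ≤ r a.1) := by simp [h]
        rw [← this] at ha
        simpa using ha
    rw [h1, h2]
    exact exists_congr h3
  have hcard : 2 ^ S ≤ 𝒜.card ^ k := by
    have h1 := Fintype.card_le_of_injective Φ hΦinj
    rwa [Fintype.card_finset, hScard, Fintype.card_fun, Fintype.card_coe,
      Fintype.card_fin] at h1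
  -- arithmetic conclusion
  have hm1 : 1 ≤ d * k := Nat.one_le_iff_ne_zero.2 (by positivity)
  have hL : 2 ^ S < 2 ^ (d * k * (Nat.log 2 (S + 1) + 1)) := by
    calc 2 ^ S ≤ 𝒜.card ^ k := hcard
      _ ≤ ((S + 1) ^ d) ^ k := Nat.pow_le_pow_left h𝒜card k
      _ = (S + 1) ^ (d * k) := by rw [← pow_mul]
      _ < (2 ^ (Nat.log 2 (S + 1) + 1)) ^ (d * k) := by
          apply Nat.pow_lt_pow_left (Nat.lt_pow_succ_log_self (by norm_num) (S + 1))
          omega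
      _ = 2 ^ (d * k * (Nat.log 2 (S + 1) + 1)) := by rw [← pow_mul]; ring_nf
  have hSle : S ≤ d * k * (Nat.log 2 (S + 1) + 1) :=
    le_of_lt ((Nat.pow_lt_pow_iff_right (by norm_num)).mp hL)
  have := aux_arith hm1 hSle
  calc S ≤ 5 * (d * k) * (Nat.log 2 (d * k) + 1) := this
    _ = 5 * d * k * (Nat.log 2 (d * k) + 1) := by ring
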